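/- Let g ≥ 2 and let a_1, …, a_{g+1} ∈ ℂ. Let n = g(g+1)/2 and let M be the n×n matrix whose rows are indexed by the pairs (r,s) with 1 ≤ r < s ≤ g+1 and whose columns are indexed by the pairs (i,j) with 1 ≤ i ≤ j ≤ g (both in lexicographic order), with entries M_{(r,s),(i,j)} = a_r^{i−1} a_s^{j−1} + a_r^{j−1} a_s^{i−1} for i < j and M_{(r,s),(i,i)} = a_r^{i−1} a_s^{i−1}. Then there is a sign ε_g ∈ {+1, −1}, depending only on g, such that det M = ε_g · ∏_{1 ≤ r < s ≤ g+1} (a_r − a_s)^{g−1} for all choices of a_1, …, a_{g+1}. In particular det M ≠ 0 whenever the a_r are pairwise distinct. -/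

import Mathlib

open Finset

/-- The coefficient matrix of the linear system of Proposition 6.2: rows are indexed by
pairs `(r,s)` with `r < s` in `Fin (g+1)`, columns by pairs `(i,j)` with `i ≤ j` in `Fin g`
(so that `i−1, j−1` are the exponents); the entry is
`a_r^{i−1} a_s^{j−1} + a_r^{j−1} a_s^{i−1}` for `i < j` and `a_r^{i−1} a_s^{i−1}` for
`i = j`. -/
noncomputable def pairCoeffMatrix (g : ℕ) (a : Fin (g + 1) → ℂ)
    (rs : {p : Fin (g + 1) × Fin (g + 1) // p.1 < p.2})
    (ij : {p : Fin g × Fin g // p.1 ≤ p.2}) : ℂ :=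
  if ij.1.1 = ij.1.2 then
    a rs.1.1 ^ (ij.1.1 : ℕ) * a rs.1.2 ^ (ij.1.1 : ℕ)
  else
    a rs.1.1 ^ (ij.1.1 : ℕ) * a rs.1.2 ^ (ij.1.2 : ℕ)
      + a rs.1.1 ^ (ij.1.2 : ℕ) * a rs.1.2 ^ (ij.1.1 : ℕ)

namespace PairDetAux

abbrev RT (m : ℕ) := {p : Fin m × Fin m // p.1 < p.2}
abbrev CT (g : ℕ) := {p : Fin g × Fin g // p.1 ≤ p.2}

variable {R : Type*} [CommRing R] {m : ℕ}

/-- The second compound matrix. -/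
def cmp2 (A : Matrix (Fin m) (Fin m) R) : Matrix (RT m) (RT m) R :=
  Matrix.of fun p q => A p.1.1 q.1.1 * A p.1.2 q.1.2 - A p.1.1 q.1.2 * A p.1.2 q.1.1

lemma cmp2_mul (A B : Matrix (Fin m) (Fin m) R) :
    cmp2 (A * B) = cmp2 A * cmp2 B := by
  ext p q
  set f : Fin m × Fin m → R := fun x => A p.1.1 x.1 * A p.1.2 x.2 *
        (B x.1 q.1.1 * B x.2 q.1.2 - B x.1 q.1.2 * B x.2 q.1.1) with hf
  have h1 : cmp2 (A * B) p q = ∑ x : Fin m × Fin m, f x := by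
    simp only [cmp2, Matrix.of_apply, Matrix.mul_apply, Finset.sum_mul_sum,
      Fintype.sum_prod_type, hf]
    rw [← Finset.sum_sub_distrib]
    refine Finset.sum_congr rfl fun k _ => ?_
    rw [← Finset.sum_sub_distrib]
    refine Finset.sum_congr rfl fun l _ => ?_
    ring
  have h2 : ∑ x : Fin m × Fin m, f x
      = ∑ x ∈ univ.filter (fun x : Fin m × Fin m => x.1 < x.2), (f x + f x.swap) := by
    rw [Finset.sum_add_distrib]
    have hswap : ∑ x ∈ univ.filter (fun x : Fin m × Fin m => x.1 < x.2), f x.swap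
        = ∑ x ∈ univ.filter (fun x : Fin m × Fin m => x.2 < x.1), f x := by
      apply Finset.sum_nbij' (fun x => x.swap) (fun x => x.swap) <;> simp
    rw [hswap]
    rw [← Finset.sum_filter_add_sum_filter_not univ (fun x : Fin m × Fin m => x.1 < x.2) f]
    congr 1
    rw [← Finset.sum_filter_add_sum_filter_not (univ.filter (fun x : Fin m × Fin m => ¬ x.1 < x.2))
      (fun x : Fin m × Fin m => x.2 < x.1) f, Finset.filter_filter]
    have : ∑ x ∈ (univ.filter (fun x : Fin m × Fin m => ¬ x.1 < x.2)).filter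
        (fun x => ¬ x.2 < x.1), f x = 0 := by
      apply Finset.sum_eq_zero
      intro x hx
      simp only [Finset.mem_filter] at hx
      have : x.1 = x.2 := le_antisymm (not_lt.mp hx.2) (not_lt.mp hx.1.2)
      simp only [hf, this]; ring
    rw [this, add_zero]
    apply Finset.sum_congr _ (fun _ _ => rfl)
    ext x; simp only [Finset.mem_filter, Finset.mem_univ, true_and]
    constructor
    · rintro ⟨h1, h2⟩; exact h2
    · intro h; exact ⟨asymm h, h⟩
  have h3 : ∑ x ∈ univ.filter (fun x : Fin m × Fin m => x.1 < x.2), (f x + f x.swap)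
      = ∑ c : RT m, (f c.1 + f c.1.swap) := by
    rw [← Finset.sum_subtype (univ.filter (fun x : Fin m × Fin m => x.1 < x.2))
      (by simp) (fun x => f x + f x.swap)]
  rw [h1, h2, h3]
  simp only [Matrix.mul_apply]
  refine Finset.sum_congr rfl fun c _ => ?_
  simp only [cmp2, Matrix.of_apply, hf, Prod.fst_swap, Prod.snd_swap]
  ring

lemma cmp2_diagonal (D : Fin m → R) :
    cmp2 (Matrix.diagonal D) = Matrix.diagonal (fun p : RT m => D p.1.1 * D p.1.2) := by
  ext p q
  simp only [cmp2, Matrix.of_apply, Matrix.diagonal_apply]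
  by_cases h : p = q
  · subst h
    simp [ne_of_lt p.2, (ne_of_lt p.2).symm]
  · rw [if_neg h]
    have h12 : ¬ (p.1.1 = q.1.2 ∧ p.1.2 = q.1.1) := by
      rintro ⟨h1, h2⟩
      exact absurd (h1 ▸ h2 ▸ q.2) (asymm p.2)
    have h11 : ¬ (p.1.1 = q.1.1 ∧ p.1.2 = q.1.2) := by
      rintro ⟨h1, h2⟩
      exact h (Subtype.ext (Prod.ext h1 h2))
    rcases not_and_or.mp h11 with h' | h' <;> rcases not_and_or.mp h12 with h'' | h'' <;>
      · rw [if_neg h', if_neg h'']; ring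

lemma prod_pairs_diag (D : Fin m → R) :
    ∏ p : RT m, (D p.1.1 * D p.1.2) = (∏ r, D r) ^ (m - 1) := by
  have h0 : ∏ p : RT m, (D p.1.1 * D p.1.2)
      = ∏ x ∈ univ.filter (fun x : Fin m × Fin m => x.1 < x.2), (D x.1 * D x.2) := by
    rw [← Finset.prod_subtype (univ.filter (fun x : Fin m × Fin m => x.1 < x.2))
      (by simp) (fun x : Fin m × Fin m => D x.1 * D x.2)]
  have h1 : ∏ x ∈ univ.filter (fun x : Fin m × Fin m => x.1 < x.2), (D x.1 * D x.2)
      = ∏ x ∈ univ.filter (fun x : Fin m × Fin m => x.1 ≠ x.2), D x.1 := by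
    rw [Finset.prod_mul_distrib]
    have hswap : ∏ x ∈ univ.filter (fun x : Fin m × Fin m => x.1 < x.2), D x.2
        = ∏ x ∈ univ.filter (fun x : Fin m × Fin m => x.2 < x.1), D x.1 := by
      apply Finset.prod_nbij' (fun x => x.swap) (fun x => x.swap) <;> simp
    rw [hswap, ← Finset.prod_union]
    · apply Finset.prod_congr _ (fun _ _ => rfl)
      ext x
      simp only [Finset.mem_union, Finset.mem_filter, Finset.mem_univ, true_and]
      exact ne_iff_lt_or_gt.symm
    · rw [Finset.disjoint_filter]
      intro x _ h1
      simp [asymm h1]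
  have h2 : ∏ x ∈ univ.filter (fun x : Fin m × Fin m => x.1 ≠ x.2), D x.1
      = ∏ r, D r ^ (m - 1) := by
    rw [Finset.prod_filter]
    rw [Fintype.prod_prod_type]
    refine Finset.prod_congr rfl fun r _ => ?_
    have : ∀ s : Fin m, ((r, s).1 ≠ (r, s).2) = (r ≠ s) := fun s => rfl
    calc ∏ s : Fin m, (if (r, s).1 ≠ (r, s).2 then D (r, s).1 else 1)
        = (∏ s ∈ univ \ {r}, (if (r,s).1 ≠ (r,s).2 then D (r,s).1 else 1)) *
          (if (r,r).1 ≠ (r,r).2 then D (r,r).1 else 1) :=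
          (Finset.prod_eq_prod_diff_singleton_mul (Finset.mem_univ r) _)
      _ = D r ^ (m - 1) := by
          rw [if_neg (by simp), mul_one]
          rw [Finset.prod_eq_pow_card (b := D r), Finset.card_sdiff_of_subset (by simp)]
          · simp
          · intro x hx
            simp only [Finset.mem_sdiff, Finset.mem_singleton] at hx
            rw [if_pos]
            exact fun hc => hx.2 hc.symm
  rw [h0, h1, h2, Finset.prod_pow]

set_option maxHeartbeats 1600000 in
lemma cmp2_transvection_apply {a b : Fin m} (hab : a ≠ b) (c : R) (p q : RT m)
    (h : (p.1.1 = a ∨ p.1.2 = a) → (q.1.1 = a ∨ q.1.2 = a)) :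
    cmp2 (Matrix.transvection a b c) p q = if p = q then 1 else 0 := by
  obtain ⟨⟨p1, p2⟩, hp⟩ := p
  obtain ⟨⟨q1, q2⟩, hq⟩ := q
  simp only [Fin.ext_iff, Fin.lt_def] at hp hq hab h
  simp only [cmp2, Matrix.of_apply, Matrix.transvection, Matrix.add_apply, Matrix.one_apply,
    Matrix.single, Matrix.of_apply, Subtype.mk.injEq, Prod.mk.injEq, Fin.ext_iff]
  split_ifs <;> first | (exfalso; omega) | norm_num | ring1

lemma det_cmp2_transvection {a b : Fin m} (hab : a ≠ b) (c : R) :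
    (cmp2 (Matrix.transvection a b c)).det = 1 := by
  classical
  set w : RT m → ℕ := fun p => if p.1.1 = a ∨ p.1.2 = a then 0 else 1 with hw
  have h0 : ∀ r : RT m, (r.1.1 = a ∨ r.1.2 = a) → w r = 0 := fun r h => by simp [hw, h]
  have h1 : ∀ r : RT m, ¬(r.1.1 = a ∨ r.1.2 = a) → w r = 1 := fun r h => by simp [hw, h]
  have hbt : (cmp2 (Matrix.transvection a b c)).BlockTriangular w := by
    intro p q hlt
    by_cases hp : (p.1.1 = a ∨ p.1.2 = a)
    · rw [h0 p hp] at hlt; omega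
    · rw [cmp2_transvection_apply hab c p q (fun hc => absurd hc hp), if_neg]
      rintro rfl; exact lt_irrefl _ hlt
  rw [hbt.det]
  apply Finset.prod_eq_one
  intro k _
  have hblock : (cmp2 (Matrix.transvection a b c)).toSquareBlock w k = 1 := by
    ext p q
    have hcond : (p.1.1.1 = a ∨ p.1.1.2 = a) → (q.1.1.1 = a ∨ q.1.1.2 = a) := by
      intro hc
      by_contra hq
      have e1 := h0 p.1 hc
      have e2 := h1 q.1 hq
      rw [p.2] at e1; rw [q.2] at e2; omega
    have hval := cmp2_transvection_apply hab c p.1 q.1 hcond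
    simp only [Matrix.toSquareBlock_def, Matrix.of_apply]
    rw [hval, Matrix.one_apply]
    by_cases hpq : p = q
    · subst hpq; rw [if_pos rfl, if_pos rfl]
    · rw [if_neg, if_neg hpq]
      exact fun hc => hpq (Subtype.ext hc)
  rw [hblock, Matrix.det_one]

lemma det_cmp2 {K : Type*} [Field K] (A : Matrix (Fin m) (Fin m) K) :
    (cmp2 A).det = A.det ^ (m - 1) := by
  apply Matrix.diagonal_transvection_induction
    (P := fun B : Matrix (Fin m) (Fin m) K => (cmp2 B).det = B.det ^ (m - 1))
  · intro D _
    rw [cmp2_diagonal, Matrix.det_diagonal, Matrix.det_diagonal, prod_pairs_diag]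
  · intro t
    obtain ⟨ti, tj, htij, tc⟩ := t
    rw [Matrix.TransvectionStruct.toMatrix_mk, det_cmp2_transvection htij,
      Matrix.det_transvection_of_ne _ _ htij, one_pow]
  · intro A B hA hB
    rw [cmp2_mul, Matrix.det_mul, Matrix.det_mul, hA, hB, mul_pow]

lemma cmp2_map {S : Type*} [CommRing S] (f : R →+* S) (A : Matrix (Fin m) (Fin m) R) :
    cmp2 (A.map f) = (cmp2 A).map f := by
  ext p q
  simp [cmp2, Matrix.map_apply, map_mul, map_sub]

def Tmat (g : ℕ) : Matrix (RT (g + 1)) (CT g) ℤ :=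
  Matrix.of fun q c =>
    (if q.1.1 = c.1.1.succ ∧ q.1.2 = c.1.2.castSucc then 1 else 0)
      - (if q.1.1 = c.1.1.castSucc ∧ q.1.2 = c.1.2.succ then 1 else 0)

def Smat (g : ℕ) : Matrix (CT g) (RT (g + 1)) ℤ :=
  Matrix.of fun c q =>
    -(if (q.1.1 : ℕ) ≤ (c.1.1 : ℕ) ∧ (c.1.1 : ℕ) + (c.1.2 : ℕ) + 1 = (q.1.1 : ℕ) + (q.1.2 : ℕ)
      then 1 else 0)

lemma sum_ind {α : Type*} [CommRing α] (A : RT m → α) (x y : Fin m) :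
    ∑ q : RT m, A q * (if q.1.1 = x ∧ q.1.2 = y then 1 else 0)
      = if h : x < y then A ⟨(x, y), h⟩ else 0 := by
  by_cases h : x < y
  · rw [dif_pos h, Finset.sum_eq_single (⟨(x, y), h⟩ : RT m)]
    · simp
    · intro q _ hq
      rw [if_neg, mul_zero]
      rintro ⟨h1, h2⟩
      exact hq (Subtype.ext (Prod.ext h1 h2))
    · intro habs; exact absurd (Finset.mem_univ _) habs
  · rw [dif_neg h]
    apply Finset.sum_eq_zero
    intro q _
    rw [if_neg, mul_zero]
    rintro ⟨h1, h2⟩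
    exact h (h1 ▸ h2 ▸ q.2)

lemma smat_mul_tmat (g : ℕ) : Smat g * Tmat g = 1 := by
  ext c c'
  rw [Matrix.mul_apply]
  have expand : ∀ q : RT (g+1), Smat g c q * Tmat g q c'
      = Smat g c q * (if q.1.1 = c'.1.1.succ ∧ q.1.2 = c'.1.2.castSucc then 1 else 0)
        - Smat g c q * (if q.1.1 = c'.1.1.castSucc ∧ q.1.2 = c'.1.2.succ then 1 else 0) := by
    intro q; rw [Tmat]; simp only [Matrix.of_apply]; ring
  rw [Finset.sum_congr rfl (fun q _ => expand q), Finset.sum_sub_distrib,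
    sum_ind (fun q => Smat g c q), sum_ind (fun q => Smat g c q), Matrix.one_apply]
  have hcc : (c = c') ↔ ((c.1.1 : ℕ) = (c'.1.1 : ℕ) ∧ (c.1.2 : ℕ) = (c'.1.2 : ℕ)) := by
    simp [Subtype.ext_iff, Prod.ext_iff, Fin.ext_iff]
  simp only [hcc, Smat, Matrix.of_apply, Fin.lt_def, Fin.val_succ, Fin.coe_castSucc]
  have h2 := c.2
  have h2' := c'.2
  rw [Fin.le_def] at h2 h2'
  split_ifs <;> omega

/-- the coefficient matrix over an arbitrary commutative ring -/
def pcm (g : ℕ) (v : Fin (g + 1) → R) : Matrix (RT (g + 1)) (CT g) R :=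
  Matrix.of fun rs ij =>
    if ij.1.1 = ij.1.2 then v rs.1.1 ^ (ij.1.1 : ℕ) * v rs.1.2 ^ (ij.1.1 : ℕ)
    else v rs.1.1 ^ (ij.1.1 : ℕ) * v rs.1.2 ^ (ij.1.2 : ℕ)
      + v rs.1.1 ^ (ij.1.2 : ℕ) * v rs.1.2 ^ (ij.1.1 : ℕ)

lemma key_identity (g : ℕ) (v : Fin (g + 1) → R) :
    Matrix.diagonal (fun p : RT (g + 1) => v p.1.1 - v p.1.2) * pcm g v
      = cmp2 (Matrix.vandermonde v) * (Tmat g).map (Int.cast : ℤ → R) := by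
  ext p c
  rw [Matrix.diagonal_mul, Matrix.mul_apply]
  have expand : ∀ q : RT (g+1), cmp2 (Matrix.vandermonde v) p q * (Tmat g).map Int.cast q c
      = cmp2 (Matrix.vandermonde v) p q *
          (if q.1.1 = c.1.1.succ ∧ q.1.2 = c.1.2.castSucc then 1 else 0)
        - cmp2 (Matrix.vandermonde v) p q *
          (if q.1.1 = c.1.1.castSucc ∧ q.1.2 = c.1.2.succ then 1 else 0) := by
    intro q
    rw [Tmat]
    simp only [Matrix.map_apply, Matrix.of_apply, Int.cast_sub]
    push_cast
    ring
  rw [Finset.sum_congr rfl (fun q _ => expand q), Finset.sum_sub_distrib,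
    sum_ind (fun q => cmp2 (Matrix.vandermonde v) p q),
    sum_ind (fun q => cmp2 (Matrix.vandermonde v) p q)]
  have halways : c.1.1.castSucc < c.1.2.succ := by
    rw [Fin.lt_def, Fin.coe_castSucc, Fin.val_succ]
    exact Nat.lt_succ_of_le (Fin.le_def.mp c.2)
  rw [dif_pos halways]
  simp only [cmp2, pcm, Matrix.of_apply, Matrix.vandermonde_apply, Fin.val_succ,
    Fin.coe_castSucc]
  by_cases hij : c.1.1 = c.1.2
  · rw [if_pos hij, dif_neg]
    · have hval : (c.1.2 : ℕ) = (c.1.1 : ℕ) := by rw [hij]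
      rw [hval]
      ring
    · rw [Fin.lt_def, Fin.val_succ, Fin.coe_castSucc, hij]
      omega
  · rw [if_neg hij]
    have hlt : (c.1.1 : ℕ) < (c.1.2 : ℕ) :=
      lt_of_le_of_ne (Fin.le_def.mp c.2) (fun hc => hij (Fin.ext hc))
    by_cases hsucc : (c.1.1 : ℕ) + 1 < (c.1.2 : ℕ)
    · rw [dif_pos (by rw [Fin.lt_def, Fin.val_succ, Fin.coe_castSucc]; exact hsucc)]
      ring
    · rw [dif_neg (by rw [Fin.lt_def, Fin.val_succ, Fin.coe_castSucc]; exact hsucc)]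
      have hval : (c.1.2 : ℕ) = (c.1.1 : ℕ) + 1 := by omega
      rw [hval]
      ring

lemma prod_pairs_eq (f : Fin m → Fin m → R) :
    ∏ p : RT m, f p.1.1 p.1.2 = ∏ i : Fin m, ∏ j ∈ Ioi i, f i j := by
  rw [Finset.prod_sigma']
  rw [← Finset.prod_subtype (univ.filter (fun x : Fin m × Fin m => x.1 < x.2))
    (by simp) (fun x : Fin m × Fin m => f x.1 x.2)]
  apply Finset.prod_nbij' (fun x => (⟨x.1, x.2⟩ : (_ : Fin m) × Fin m)) (fun y => (y.1, y.2)) <;>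
    simp [Finset.mem_sigma, Finset.mem_Ioi]

end PairDetAux

open PairDetAux


theorem pairCoeffMatrix_det
    (g : ℕ) (hg : 2 ≤ g)
    (σ : {p : Fin (g + 1) × Fin (g + 1) // p.1 < p.2} ≃ {p : Fin g × Fin g // p.1 ≤ p.2}) :
    ∃ ε : ℂ, (ε = 1 ∨ ε = -1) ∧
      (∀ a : Fin (g + 1) → ℂ,
        (Matrix.of fun r r' : {p : Fin (g + 1) × Fin (g + 1) // p.1 < p.2} =>
            pairCoeffMatrix g a r (σ r')).det
          = ε * ∏ p : {p : Fin (g + 1) × Fin (g + 1) // p.1 < p.2},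
              (a p.1.1 - a p.1.2) ^ (g - 1)) ∧
      (∀ a : Fin (g + 1) → ℂ, Function.Injective a →
        (Matrix.of fun r r' : {p : Fin (g + 1) × Fin (g + 1) // p.1 < p.2} =>
            pairCoeffMatrix g a r (σ r')).det ≠ 0) := by
  classical
  -- the universal (polynomial) setting
  let v : Fin (g + 1) → MvPolynomial (Fin (g + 1)) ℂ := MvPolynomial.X
  let V : Matrix (Fin (g + 1)) (Fin (g + 1)) (MvPolynomial (Fin (g + 1)) ℂ) := Matrix.vandermonde v
  let Dm : Matrix (RT (g + 1)) (RT (g + 1)) (MvPolynomial (Fin (g + 1)) ℂ) :=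
    Matrix.diagonal (fun p : RT (g + 1) => v p.1.1 - v p.1.2)
  let Mσ : Matrix (RT (g + 1)) (RT (g + 1)) (MvPolynomial (Fin (g + 1)) ℂ) := (pcm g v).submatrix id σ
  let Tσ : Matrix (RT (g + 1)) (RT (g + 1)) ℤ := (Tmat g).submatrix id σ
  let t : ℤ := Tσ.det
  let N : ℕ := Fintype.card (RT (g + 1))
  let Pi : MvPolynomial (Fin (g + 1)) ℂ := ∏ p : RT (g + 1), (v p.1.1 - v p.1.2)
  -- t = ±1
  have hST : (Smat g).submatrix σ id * Tσ = 1 := by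
    ext p q
    rw [Matrix.mul_apply]
    have h1 := congrFun (congrFun (smat_mul_tmat g) (σ p)) (σ q)
    rw [Matrix.mul_apply] at h1
    simp only [Tσ, Matrix.submatrix_apply, id_eq]
    rw [h1]
    simp [Matrix.one_apply, Equiv.apply_eq_iff_eq]
  have ht : t = 1 ∨ t = -1 := by
    have := congrArg Matrix.det hST
    rw [Matrix.det_mul, Matrix.det_one] at this
    exact Int.isUnit_iff.mp (IsUnit.of_mul_eq_one _ ((mul_comm _ _).trans this))
  -- Pi ≠ 0
  have hfac : ∀ p : RT (g + 1), v p.1.1 - v p.1.2 ≠ 0 := by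
    intro p hzero
    have hne : p.1.2 ≠ p.1.1 := (ne_of_lt p.2).symm
    have := congrArg (MvPolynomial.eval (fun k => if k = p.1.1 then (1 : ℂ) else 0)) hzero
    simp [v, hne] at this
  have hPi : Pi ≠ 0 := Finset.prod_ne_zero_iff.mpr (fun p _ => hfac p)
  -- det V in terms of Pi
  have hdetV : V.det = (-1 : MvPolynomial (Fin (g + 1)) ℂ) ^ N * Pi := by
    rw [Matrix.det_vandermonde, ← prod_pairs_eq (fun i j => v j - v i)]
    have : ∀ p : RT (g + 1), v p.1.2 - v p.1.1 = -1 * (v p.1.1 - v p.1.2) := fun p => by ring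
    rw [Finset.prod_congr rfl (fun p _ => this p), Finset.prod_mul_distrib,
      Finset.prod_const, Finset.card_univ]
  -- det cmp2 V = det V ^ g
  have hc2 : (cmp2 V).det = V.det ^ g := by
    let K := FractionRing (MvPolynomial (Fin (g + 1)) ℂ)
    have hinj : Function.Injective (algebraMap (MvPolynomial (Fin (g + 1)) ℂ) K) := IsFractionRing.injective (MvPolynomial (Fin (g + 1)) ℂ) K
    apply hinj
    rw [map_pow, RingHom.map_det, RingHom.map_det]
    simp only [RingHom.mapMatrix_apply]
    rw [← cmp2_map (algebraMap (MvPolynomial (Fin (g + 1)) ℂ) K) V, det_cmp2]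
    norm_num
  -- the key identity with σ-relabelled columns
  have hmain : Dm * Mσ = cmp2 V * ((Tmat g).map (Int.cast : ℤ → MvPolynomial (Fin (g + 1)) ℂ)).submatrix id σ := by
    refine Matrix.ext fun p q => ?_
    have h1 := congrFun (congrFun (key_identity g v) p) (σ q)
    rw [Matrix.diagonal_mul] at h1
    rw [Matrix.mul_apply] at h1
    rw [Matrix.diagonal_mul, Matrix.mul_apply]
    simpa [Mσ] using h1
  -- take determinants
  have hTcast : ((Tmat g).map (Int.cast : ℤ → MvPolynomial (Fin (g + 1)) ℂ)).submatrix id σ = Tσ.map (Int.cast : ℤ → MvPolynomial (Fin (g + 1)) ℂ) := rfl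
  have hTdet : (Tσ.map (Int.cast : ℤ → MvPolynomial (Fin (g + 1)) ℂ)).det = (t : MvPolynomial (Fin (g + 1)) ℂ) := by
    rw [show ((Int.cast : ℤ → MvPolynomial (Fin (g + 1)) ℂ)) = ⇑(Int.castRingHom (MvPolynomial (Fin (g + 1)) ℂ)) from rfl, ← RingHom.mapMatrix_apply,
      ← RingHom.map_det]
  have hdets : Pi * Mσ.det = ((-1 : MvPolynomial (Fin (g + 1)) ℂ) ^ N * Pi) ^ g * (t : MvPolynomial (Fin (g + 1)) ℂ) := by
    have := congrArg Matrix.det hmain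
    rw [Matrix.det_mul, Matrix.det_mul, Matrix.det_diagonal, hTcast, hTdet, hc2, hdetV] at this
    simpa [Pi] using this
  have hg1 : g - 1 + 1 = g := by omega
  have hMdet : Mσ.det = (-1 : MvPolynomial (Fin (g + 1)) ℂ) ^ (N * g) * (t : MvPolynomial (Fin (g + 1)) ℂ) * Pi ^ (g - 1) := by
    apply mul_left_cancel₀ hPi
    rw [hdets, mul_pow, ← pow_mul,
      show Pi ^ g = Pi ^ (g - 1) * Pi from by rw [← pow_succ, hg1]]
    ring
  -- the sign
  refine ⟨(-1 : ℂ) ^ (N * g) * (t : ℂ), ?_, ?_, ?_⟩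
  · rcases ht with ht' | ht' <;> rcases Nat.even_or_odd (N * g) with hp | hp
    · left; simp [ht', hp.neg_one_pow]
    · right; simp [ht', hp.neg_one_pow]
    · right; simp [ht', hp.neg_one_pow]
    · left; simp [ht', hp.neg_one_pow]
  · intro a
    have hmap : (Matrix.of fun r r' : RT (g + 1) => pairCoeffMatrix g a r (σ r'))
        = Mσ.map (MvPolynomial.eval a) := by
      ext r r'
      simp only [Matrix.map_apply, Matrix.of_apply, Matrix.submatrix_apply, id_eq, Mσ,
        pcm, pairCoeffMatrix]
      split_ifs <;> simp [v]
    rw [hmap, ← RingHom.mapMatrix_apply, ← RingHom.map_det, hMdet]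
    rw [map_mul, map_mul, map_pow, map_neg, map_one, map_pow, map_prod]
    simp only [v, map_sub, MvPolynomial.eval_X, map_intCast]
    rw [Finset.prod_pow]
  · intro a hainj
    have hmap : (Matrix.of fun r r' : RT (g + 1) => pairCoeffMatrix g a r (σ r'))
        = Mσ.map (MvPolynomial.eval a) := by
      ext r r'
      simp only [Matrix.map_apply, Matrix.of_apply, Matrix.submatrix_apply, id_eq, Mσ,
        pcm, pairCoeffMatrix]
      split_ifs <;> simp [v]
    rw [hmap, ← RingHom.mapMatrix_apply, ← RingHom.map_det, hMdet]
    rw [map_mul, map_mul, map_pow, map_neg, map_one, map_pow, map_prod]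
    simp only [v, map_sub, MvPolynomial.eval_X, map_intCast]
    apply mul_ne_zero
    apply mul_ne_zero
    · exact pow_ne_zero _ (by norm_num)
    · rcases ht with ht' | ht' <;> simp [ht']
    · apply pow_ne_zero
      apply Finset.prod_ne_zero_iff.mpr
      intro p _
      exact sub_ne_zero.mpr (fun hc => (ne_of_lt p.2) (hainj hc))
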